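/- Let d ≥ 1 and N ≥ 1 be natural numbers and a ∈ (0,1). Let D ⊆ {0,1,…,d}^N be a set of N-blocks with cardinality #D ≤ ((1+a)/(2a))^N. Define T_D := { Σ_{t=0}^∞ a^t·k_t : (k_t)_{t≥0} is a sequence with values in {0,1,…,d} such that for every j ≥ 0 the reversed block (k_{(j+1)N−1}, k_{(j+1)N−2}, …, k_{jN}) belongs to D }. Then the closure of T_D in ℝ has Lebesgue measure zero. -/

import Mathlib

open MeasureTheory
open scoped ENNReal

/-- Digit at position `t` reconstructed from a tuple of `m` reversed blocks of length `N`. -/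
def blockDig (N m : ℕ) (hN : 0 < N) (c : Fin m → Fin N → ℕ) (t : ℕ) : ℕ :=
  if h : t < m * N then
    c ⟨t / N, by rwa [Nat.div_lt_iff_lt_mul hN]⟩
      ⟨(t / N + 1) * N - 1 - t, by
        have h1 : t / N * N ≤ t := Nat.div_mul_le_self t N
        have h2 : (t / N + 1) * N = t / N * N + N := by ring
        omega⟩
  else 0

lemma blockDig_eq (N m : ℕ) (hN : 0 < N) (k : ℕ → ℕ) (t : ℕ) (ht : t < m * N) :
    blockDig N m hN (fun (j : Fin m) (i : Fin N) => k ((j + 1) * N - 1 - (i : ℕ))) t = k t := by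
  rw [blockDig, dif_pos ht]
  show k ((t / N + 1) * N - 1 - ((t / N + 1) * N - 1 - t)) = k t
  congr 1
  have h1 : t / N * N ≤ t := Nat.div_mul_le_self t N
  have h2 : (t / N + 1) * N = t / N * N + N := by ring
  have h3 : N * (t / N) + t % N = t := Nat.div_add_mod t N
  have h4 : t % N < N := Nat.mod_lt t hN
  have h5 : N * (t / N) = t / N * N := by ring
  rw [h2]
  omega

theorem closure_blockRestricted_sums_measure_zero (d N : ℕ) (hd : 1 ≤ d) (hN : 1 ≤ N)
    (a : ℝ) (ha : a ∈ Set.Ioo (0:ℝ) 1) (D : Finset (Fin N → ℕ))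
    (hDval : ∀ b ∈ D, ∀ i, b i ≤ d)
    (hcard : (D.card : ℝ) ≤ ((1 + a) / (2 * a)) ^ N) :
    MeasureTheory.volume (closure {x : ℝ | ∃ k : ℕ → ℕ, (∀ t, k t ≤ d) ∧
      (∀ j : ℕ, (fun i : Fin N => k ((j + 1) * N - 1 - (i : ℕ))) ∈ D) ∧
      x = ∑' t : ℕ, a ^ t * k t}) = 0 := by
  obtain ⟨ha0, ha1⟩ := ha
  have hN0 : 0 < N := hN
  set T : Set ℝ := {x : ℝ | ∃ k : ℕ → ℕ, (∀ t, k t ≤ d) ∧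
      (∀ j : ℕ, (fun i : Fin N => k ((j + 1) * N - 1 - (i : ℕ))) ∈ D) ∧
      x = ∑' t : ℕ, a ^ t * k t} with hT
  -- summability
  have hgeo : Summable (fun t : ℕ => a ^ t * d) :=
    (summable_geometric_of_lt_one ha0.le ha1).mul_right (d:ℝ)
  have hsum : ∀ k : ℕ → ℕ, (∀ t, k t ≤ d) → Summable (fun t : ℕ => a ^ t * (k t : ℝ)) := by
    intro k hk
    refine Summable.of_nonneg_of_le (fun t => ?_) (fun t => ?_) hgeo
    · positivity
    · exact mul_le_mul_of_nonneg_left (by exact_mod_cast hk t) (by positivity)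
  set ε : ℕ → ℝ := fun m => a ^ (m * N) * d / (1 - a) with hε
  have hεpos : ∀ m, 0 ≤ ε m := by
    intro m
    have : (0:ℝ) < 1 - a := by linarith
    positivity
  -- tail bound
  have htail : ∀ (k : ℕ → ℕ), (∀ t, k t ≤ d) → ∀ m : ℕ,
      ∑ t ∈ Finset.range (m * N), a ^ t * (k t : ℝ) ≤ (∑' t : ℕ, a ^ t * k t) ∧
      (∑' t : ℕ, a ^ t * (k t : ℝ)) ≤ ∑ t ∈ Finset.range (m * N), a ^ t * k t + ε m := by
    intro k hk m
    have hs := hsum k hk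
    have hsplit := (Summable.sum_add_tsum_nat_add (f := fun t : ℕ => a ^ t * (k t : ℝ)) (m * N) hs).symm
    have htail0 : 0 ≤ ∑' t : ℕ, a ^ (t + m * N) * (k (t + m * N) : ℝ) := by
      refine tsum_nonneg fun t => by positivity
    have htailsum : Summable (fun t : ℕ => a ^ (t + m * N) * (k (t + m * N) : ℝ)) :=
      (summable_nat_add_iff (m * N)).2 hs
    have htailub : (∑' t : ℕ, a ^ (t + m * N) * (k (t + m * N) : ℝ)) ≤ ε m := by
      have hle : ∀ t : ℕ, a ^ (t + m * N) * (k (t + m * N) : ℝ) ≤ a ^ (m * N) * (a ^ t * d) := by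
        intro t
        have : a ^ (t + m * N) = a ^ (m * N) * a ^ t := by rw [← pow_add]; ring_nf
        rw [this, mul_assoc]
        refine mul_le_mul_of_nonneg_left ?_ (by positivity)
        exact mul_le_mul_of_nonneg_left (by exact_mod_cast hk _) (by positivity)
      have hsum2 : Summable (fun t : ℕ => a ^ (m * N) * (a ^ t * (d:ℝ))) := hgeo.mul_left _
      calc (∑' t : ℕ, a ^ (t + m * N) * (k (t + m * N) : ℝ))
          ≤ ∑' t : ℕ, a ^ (m * N) * (a ^ t * d) := Summable.tsum_le_tsum hle htailsum hsum2
        _ = a ^ (m * N) * ((1 - a)⁻¹ * d) := by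
            rw [tsum_mul_left]
            congr 1
            rw [tsum_mul_right, tsum_geometric_of_lt_one ha0.le ha1]
        _ = ε m := by rw [hε]; ring
    constructor
    · rw [hsplit]; linarith
    · rw [hsplit]; linarith
  -- the covering
  have hcover : ∀ m : ℕ, volume (closure T) ≤ (D.card : ℝ≥0∞) ^ m * ENNReal.ofReal (ε m) := by
    intro m
    set F : Finset ℝ := (Fintype.piFinset fun _ : Fin m => D).image
      (fun c => ∑ t ∈ Finset.range (m * N), a ^ t * (blockDig N m hN0 c t : ℝ)) with hF
    have hTsub : T ⊆ ⋃ y ∈ F, Set.Icc y (y + ε m) := by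
      intro x hx
      obtain ⟨k, hk, hblocks, hxeq⟩ := hx
      set c : Fin m → Fin N → ℕ :=
        fun (j : Fin m) (i : Fin N) => k ((j + 1) * N - 1 - (i : ℕ)) with hc
      have hcmem : c ∈ Fintype.piFinset fun _ : Fin m => D := by
        rw [Fintype.mem_piFinset]
        intro j
        exact hblocks j
      set y : ℝ := ∑ t ∈ Finset.range (m * N), a ^ t * (blockDig N m hN0 c t : ℝ) with hy
      have hyk : y = ∑ t ∈ Finset.range (m * N), a ^ t * (k t : ℝ) := by
        refine Finset.sum_congr rfl fun t ht => ?_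
        rw [Finset.mem_range] at ht
        rw [hc, blockDig_eq N m hN0 k t ht]
      refine Set.mem_biUnion (Finset.mem_image_of_mem _ hcmem) ?_
      obtain ⟨h1, h2⟩ := htail k hk m
      rw [hxeq]
      constructor
      · exact hyk.trans_le h1
      · exact h2.trans (le_of_eq (by rw [← hyk]))
    have hclosed : IsClosed (⋃ y ∈ F, Set.Icc y (y + ε m)) := by
      refine Set.Finite.isClosed_biUnion (Finset.finite_toSet F) fun y _ => isClosed_Icc
    have hsub : closure T ⊆ ⋃ y ∈ F, Set.Icc y (y + ε m) :=
      closure_minimal hTsub hclosed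
    calc volume (closure T) ≤ volume (⋃ y ∈ F, Set.Icc y (y + ε m)) :=
          measure_mono hsub
      _ ≤ ∑ y ∈ F, volume (Set.Icc y (y + ε m)) := measure_biUnion_finset_le F _
      _ = ∑ y ∈ F, ENNReal.ofReal (ε m) := by
          refine Finset.sum_congr rfl fun y _ => ?_
          rw [Real.volume_Icc]
          congr 1
          ring
      _ = (F.card : ℝ≥0∞) * ENNReal.ofReal (ε m) := by
          rw [Finset.sum_const, nsmul_eq_mul]
      _ ≤ (D.card : ℝ≥0∞) ^ m * ENNReal.ofReal (ε m) := by
          refine mul_le_mul_left ?_ _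
          have h1 : F.card ≤ (Fintype.piFinset fun _ : Fin m => D).card :=
            Finset.card_image_le
          have h2 : (Fintype.piFinset fun _ : Fin m => D).card = D.card ^ m := by
            rw [Fintype.card_piFinset]
            simp
          rw [← Nat.cast_pow]
          exact_mod_cast h1.trans_eq h2
  -- combine with the cardinality bound
  set r : ℝ := (1 + a) / 2 with hr
  have hr0 : 0 ≤ r := by rw [hr]; linarith
  have hr1 : r < 1 := by rw [hr]; linarith
  have hbound : ∀ m : ℕ, volume (closure T) ≤
      ENNReal.ofReal (r ^ (m * N) * (d / (1 - a))) := by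
    intro m
    refine (hcover m).trans ?_
    have h1a : (0:ℝ) < 1 - a := by linarith
    have key : (D.card : ℝ) ^ m * ε m ≤ r ^ (m * N) * (d / (1 - a)) := by
      have hcard' : (D.card : ℝ) ^ m ≤ (((1 + a) / (2 * a)) ^ N) ^ m := by
        refine pow_le_pow_left₀ (by positivity) hcard m
      have hca : (0:ℝ) ≤ ((1 + a) / (2 * a)) ^ N := by positivity
      have hstep : (D.card : ℝ) ^ m * a ^ (m * N) ≤ r ^ (m * N) := by
        have : (((1 + a) / (2 * a)) ^ N) ^ m * a ^ (m * N) = r ^ (m * N) := by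
          rw [← pow_mul, mul_comm N m, ← mul_pow, hr]
          congr 1
          field_simp
        rw [← this]
        exact mul_le_mul_of_nonneg_right hcard' (by positivity)
      calc (D.card : ℝ) ^ m * ε m = ((D.card : ℝ) ^ m * a ^ (m * N)) * (d / (1 - a)) := by
            rw [hε]; ring
        _ ≤ r ^ (m * N) * (d / (1 - a)) := by
            refine mul_le_mul_of_nonneg_right hstep (by positivity)
    calc (D.card : ℝ≥0∞) ^ m * ENNReal.ofReal (ε m)
        = ENNReal.ofReal ((D.card : ℝ) ^ m * ε m) := by
          rw [ENNReal.ofReal_mul (by positivity)]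
          congr 1
          rw [← ENNReal.ofReal_natCast D.card, ← ENNReal.ofReal_pow (by positivity)]
      _ ≤ ENNReal.ofReal (r ^ (m * N) * (d / (1 - a))) := ENNReal.ofReal_le_ofReal key
  -- take the limit m → ∞
  have hlim : Filter.Tendsto (fun m : ℕ => ENNReal.ofReal (r ^ (m * N) * (d / (1 - a))))
      Filter.atTop (nhds 0) := by
    have h1 : Filter.Tendsto (fun m : ℕ => r ^ (m * N) * (d / (1 - a)))
        Filter.atTop (nhds 0) := by
      have h2 : Filter.Tendsto (fun m : ℕ => r ^ (m * N)) Filter.atTop (nhds 0) := by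
        have h3 : Filter.Tendsto (fun m : ℕ => m * N) Filter.atTop Filter.atTop :=
          Filter.tendsto_atTop_atTop_of_monotone (fun x y hxy => Nat.mul_le_mul_right N hxy)
            (fun b => ⟨b, Nat.le_mul_of_pos_right b hN0⟩)
        exact (tendsto_pow_atTop_nhds_zero_of_lt_one hr0 hr1).comp h3
      simpa using h2.mul_const (d / (1 - a))
    have := (ENNReal.continuous_ofReal.tendsto 0).comp h1
    simpa [Function.comp_def] using this
  exact le_antisymm (ge_of_tendsto' hlim hbound) zero_le
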